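/- Let N ≥ 1 be an integer, let ε_1, …, ε_N, g, h be real numbers with h ≠ 0. Then there exists a nonzero vector φ ∈ ℂ^N satisfying ε_n·φ_n = (1/2) Σ_{m=1}^{N} ( g + i·h·sign(n − m) )·φ_m for every n ∈ {1,…,N} if and only if (g + ih)/(g − ih) = Π_{n=1}^{N} ( ε_n + i·h/2 )/( ε_n − i·h/2 ). -/

import Mathlib

open Complex Finset

lemma rd_sum_split (φ : ℕ → ℂ) (g h : ℝ) (N n : ℕ) (h1 : 1 ≤ n) (h2 : n ≤ N) :
    ∑ m ∈ Finset.Icc 1 N,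
        ((g : ℂ) + Complex.I * (h : ℂ) * (Real.sign ((n : ℝ) - (m : ℝ)) : ℂ)) * φ m
    = ((g : ℂ) - Complex.I * h) * (∑ m ∈ Finset.Icc 1 N, φ m)
      + Complex.I * h * ((∑ m ∈ Finset.Icc 1 (n - 1), φ m) + ∑ m ∈ Finset.Icc 1 n, φ m) := by
  have hIcc : ∀ k : ℕ, Finset.Icc 1 k = Finset.Ioc 0 k := by
    intro k; rw [← Finset.Icc_add_one_left_eq_Ioc]; rfl
  simp only [hIcc]
  set c : ℕ → ℂ := fun m =>
    ((g : ℂ) + Complex.I * (h : ℂ) * (Real.sign ((n : ℝ) - (m : ℝ)) : ℂ)) * φ m with hc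
  rw [← Finset.sum_Ioc_consecutive c (Nat.zero_le n) h2,
      ← Finset.sum_Ioc_consecutive φ (Nat.zero_le n) h2,
      ← Finset.sum_Ioc_consecutive c (Nat.zero_le (n-1)) (Nat.sub_le n 1),
      ← Finset.sum_Ioc_consecutive φ (Nat.zero_le (n-1)) (Nat.sub_le n 1)]
  have hsingle : Finset.Ioc (n-1) n = {n} := by
    have : n - 1 + 1 = n := Nat.succ_pred_eq_of_pos h1
    rw [← this]; simp
  rw [hsingle]
  have e1 : ∑ m ∈ Finset.Ioc 0 (n-1), c m
      = ∑ m ∈ Finset.Ioc 0 (n-1), ((g : ℂ) + Complex.I * h) * φ m := by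
    apply Finset.sum_congr rfl
    intro m hm
    have hmn : m < n := by
      have := (Finset.mem_Ioc.mp hm).2; omega
    have hs : Real.sign ((n : ℝ) - (m : ℝ)) = 1 := by
      apply Real.sign_of_pos; have : (m:ℝ) < n := by exact_mod_cast hmn
      linarith
    simp [c, hs]
  have e2 : ∑ m ∈ ({n} : Finset ℕ), c m = (g : ℂ) * φ n := by
    rw [Finset.sum_singleton, hc]; norm_num
  have e3 : ∑ m ∈ Finset.Ioc n N, c m
      = ∑ m ∈ Finset.Ioc n N, ((g : ℂ) - Complex.I * h) * φ m := by
    apply Finset.sum_congr rfl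
    intro m hm
    have hmn : n < m := (Finset.mem_Ioc.mp hm).1
    have hs : Real.sign ((n : ℝ) - (m : ℝ)) = -1 := by
      apply Real.sign_of_neg; have : (n:ℝ) < m := by exact_mod_cast hmn
      linarith
    simp only [hc, hs]
    push_cast
    ring
  rw [e1, e2, e3, ← Finset.mul_sum, ← Finset.mul_sum]
  simp only [Finset.sum_singleton]
  ring

/-- Exact (Bethe-ansatz) quantization condition of the Russian doll model: the zero-energy
Schrödinger equation `H_RD φ = 0` has a nonzero solution iff
`(g+ih)/(g−ih) = ∏ₙ (εₙ + ih/2)/(εₙ − ih/2)`. -/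
theorem russian_doll_quantization
    (N : ℕ) (hN : 1 ≤ N) (ε : ℕ → ℝ) (g h : ℝ) (hh : h ≠ 0) :
    (∃ φ : ℕ → ℂ, (∃ n ∈ Finset.Icc 1 N, φ n ≠ 0) ∧
      ∀ n ∈ Finset.Icc 1 N,
        (ε n : ℂ) * φ n = (1 / 2 : ℂ) * ∑ m ∈ Finset.Icc 1 N,
          ((g : ℂ) + Complex.I * (h : ℂ) * (Real.sign ((n : ℝ) - (m : ℝ)) : ℂ)) * φ m) ↔
    ((g : ℂ) + Complex.I * h) / ((g : ℂ) - Complex.I * h) =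
      ∏ n ∈ Finset.Icc 1 N,
        ((ε n : ℂ) + Complex.I * (h : ℂ) / 2) / ((ε n : ℂ) - Complex.I * (h : ℂ) / 2) := by
  have hI : Complex.I * (h : ℂ) ≠ 0 := by
    intro hc
    apply hh
    have := congrArg Complex.im hc
    simpa using this
  have h2I : (2 : ℂ) * (Complex.I * (h : ℂ)) ≠ 0 := mul_ne_zero two_ne_zero hI
  have hd : ∀ n : ℕ, ((ε n : ℂ) - Complex.I * (h : ℂ) / 2) ≠ 0 := by
    intro n hc
    apply hh
    have := congrArg Complex.im hc
    simp at this
    linarith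
  have hg : ((g : ℂ) - Complex.I * (h : ℂ)) ≠ 0 := by
    intro hc
    apply hh
    have := congrArg Complex.im hc
    simp at this
    linarith
  set P : ℕ → ℂ := fun k => ∏ n ∈ Finset.Icc 1 k,
      ((ε n : ℂ) + Complex.I * (h : ℂ) / 2) / ((ε n : ℂ) - Complex.I * (h : ℂ) / 2) with hP
  have hPN : (∏ n ∈ Finset.Icc 1 N,
      ((ε n : ℂ) + Complex.I * (h : ℂ) / 2) / ((ε n : ℂ) - Complex.I * (h : ℂ) / 2)) = P N := rfl
  have hP0 : P 0 = 1 := by simp [hP]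
  have hPstep : ∀ k : ℕ, P (k + 1) = P k *
      (((ε (k+1) : ℂ) + Complex.I * (h : ℂ) / 2) / ((ε (k+1) : ℂ) - Complex.I * (h : ℂ) / 2)) := by
    intro k
    rw [hP]
    exact Finset.prod_Icc_succ_top (Nat.succ_le_succ (Nat.zero_le k)) _
  have hlin : ∀ k : ℕ, ((ε (k+1) : ℂ) - Complex.I * (h : ℂ) / 2) * P (k+1)
      = ((ε (k+1) : ℂ) + Complex.I * (h : ℂ) / 2) * P k := by
    intro k
    rw [hPstep k]
    linear_combination P k * div_mul_cancel₀ ((ε (k+1) : ℂ) + Complex.I * (h : ℂ) / 2) (hd (k+1))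
  rw [hPN, div_eq_iff hg]
  constructor
  · rintro ⟨φ, ⟨n₀, hn₀, hφn₀⟩, heq⟩
    set A : ℕ → ℂ := fun k => ∑ m ∈ Finset.Icc 1 k, φ m with hA
    have hAstep : ∀ k : ℕ, A (k + 1) = A k + φ (k + 1) := by
      intro k
      rw [hA]
      exact Finset.sum_Icc_succ_top (Nat.succ_le_succ (Nat.zero_le k)) _
    have hA0 : A 0 = 0 := by simp [hA]
    have hrec : ∀ k : ℕ, k + 1 ≤ N →
        ((ε (k+1) : ℂ) - Complex.I * (h : ℂ) / 2) * A (k+1)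
          = ((ε (k+1) : ℂ) + Complex.I * (h : ℂ) / 2) * A k
            + ((g : ℂ) - Complex.I * h) * A N / 2 := by
      intro k hk
      have h1 : 1 ≤ k + 1 := Nat.succ_le_succ (Nat.zero_le k)
      have he := heq (k+1) (Finset.mem_Icc.mpr ⟨h1, hk⟩)
      rw [rd_sum_split φ g h N (k+1) h1 hk] at he
      have hsub : (k + 1) - 1 = k := rfl
      rw [hsub] at he
      have hφ : φ (k+1) = A (k+1) - A k := by rw [hAstep k]; ring
      rw [hφ] at he
      linear_combination he
    have hform : ∀ k : ℕ, k ≤ N →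
        (2 * (Complex.I * (h : ℂ))) * A k = ((g : ℂ) - Complex.I * h) * A N * (P k - 1) := by
      intro k
      induction k with
      | zero => intro _; rw [hA0, hP0]; ring
      | succ j ih =>
        intro hk
        have hj : j ≤ N := Nat.le_of_succ_le hk
        have hr := hrec j hk
        have ihj := ih hj
        have h2 : ((ε (j+1) : ℂ) - Complex.I * (h : ℂ) / 2) * ((2 * (Complex.I * (h : ℂ))) * A (j+1))
            = ((ε (j+1) : ℂ) - Complex.I * (h : ℂ) / 2) *
                (((g : ℂ) - Complex.I * h) * A N * (P (j+1) - 1)) := by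
          linear_combination (2 * (Complex.I * (h : ℂ))) * hr
            + ((ε (j+1) : ℂ) + Complex.I * (h : ℂ) / 2) * ihj
            - ((g : ℂ) - Complex.I * h) * A N * hlin j
        exact mul_left_cancel₀ (hd (j+1)) h2
    have hAN := hform N le_rfl
    have hANne : A N ≠ 0 := by
      intro h0
      apply hφn₀
      obtain ⟨hn₀1, hn₀2⟩ := Finset.mem_Icc.mp hn₀
      obtain ⟨j, rfl⟩ : ∃ j, n₀ = j + 1 := ⟨n₀ - 1, (Nat.succ_pred_eq_of_pos hn₀1).symm⟩
      have e1 : A (j+1) = 0 := by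
        apply mul_left_cancel₀ h2I
        rw [hform (j+1) hn₀2, h0]; ring
      have e2 : A j = 0 := by
        apply mul_left_cancel₀ h2I
        rw [hform j (Nat.le_of_succ_le hn₀2), h0]; ring
      have h3 := hAstep j
      rw [e1, e2] at h3
      linear_combination -h3
    have h4 : A N * (((g : ℂ) - Complex.I * h) * (P N - 1)) = A N * (2 * (Complex.I * (h : ℂ))) := by
      linear_combination (-1 : ℂ) * hAN
    have key := mul_left_cancel₀ hANne h4
    linear_combination (-1 : ℂ) * key
  · intro hcond
    have key : ((g : ℂ) - Complex.I * h) * (P N - 1) = 2 * (Complex.I * (h : ℂ)) := by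
      linear_combination (-1 : ℂ) * hcond
    have htel : ∀ k : ℕ, ∑ m ∈ Finset.Icc 1 k, (P m - P (m - 1)) = P k - 1 := by
      intro k
      induction k with
      | zero => simp [hP0]
      | succ i ih =>
        rw [Finset.sum_Icc_succ_top (Nat.succ_le_succ (Nat.zero_le i)), ih]
        have hsub : (i + 1) - 1 = i := rfl
        rw [hsub]
        ring
    refine ⟨fun n => P n - P (n - 1), ?_, ?_⟩
    · by_contra hall
      push_neg at hall
      have hzero : ∑ m ∈ Finset.Icc 1 N, (P m - P (m - 1)) = 0 :=
        Finset.sum_eq_zero hall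
      rw [htel N] at hzero
      have hPN1 : P N = 1 := by linear_combination hzero
      rw [hPN1] at key
      exact hI (by linear_combination (-1/2 : ℂ) * key)
    · intro n hn
      obtain ⟨hn1, hn2⟩ := Finset.mem_Icc.mp hn
      obtain ⟨j, rfl⟩ : ∃ j, n = j + 1 := ⟨n - 1, (Nat.succ_pred_eq_of_pos hn1).symm⟩
      rw [rd_sum_split _ g h N (j+1) hn1 hn2]
      show (ε (j+1) : ℂ) * (P (j+1) - P ((j+1) - 1))
        = (1 / 2 : ℂ) * (((g : ℂ) - Complex.I * h) * (∑ m ∈ Finset.Icc 1 N, (P m - P (m - 1)))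
          + Complex.I * h * ((∑ m ∈ Finset.Icc 1 ((j+1) - 1), (P m - P (m - 1)))
            + ∑ m ∈ Finset.Icc 1 (j+1), (P m - P (m - 1))))
      rw [htel, htel, htel]
      have hsub : (j + 1) - 1 = j := rfl
      rw [hsub]
      linear_combination hlin j - key / 2
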